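/- Let δ be a derivation on a ring R. The extension of δ to the symmetric ring of quotients with respect to any hereditary and faithful symmetric torsion theory agrees with the extension of δ to the maximal symmetric ring of quotients Q^σ_max(R). In particular, the extensions of δ to the total symmetric ring of quotients Q^σ_tot(R) and to Q^σ_max(R) agree. -/

import Mathlib

open MulOpposite TensorProduct

/-- A derivation on a ring `S`: an additive map satisfying the Leibniz rule
`δ (a * b) = δ a * b + a * δ b`. -/
def IsDerivation {S : Type*} [Ring S] (δ : S → S) : Prop :=
  (∀ a b : S, δ (a + b) = δ a + δ b) ∧ (∀ a b : S, δ (a * b) = δ a * b + a * δ b)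

/-- A Gabriel filter of left ideals of a ring `S`.  Taking `S = Rᵐᵒᵖ`, this encodes a
Gabriel filter of right ideals of `R`. -/
structure GabrielFilter (S : Type*) [Ring S] where
  sets : Set (Ideal S)
  top_mem : ⊤ ∈ sets
  mono : ∀ ⦃I J : Ideal S⦄, I ∈ sets → I ≤ J → J ∈ sets
  inf_mem : ∀ ⦃I J : Ideal S⦄, I ∈ sets → J ∈ sets → I ⊓ J ∈ sets
  quot_mem : ∀ ⦃I : Ideal S⦄, I ∈ sets → ∀ s : S,
    Submodule.comap (LinearMap.toSpanSingleton S S s) I ∈ sets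
  trans : ∀ ⦃I J : Ideal S⦄, J ∈ sets →
    (∀ s ∈ J, Submodule.comap (LinearMap.toSpanSingleton S S s) I ∈ sets) → I ∈ sets

/-- The torsion set of a module for the torsion theory corresponding to a filter `𝔉` of
ideals: the elements whose annihilator belongs to `𝔉`. -/
def torsionSet {S : Type*} [Ring S] (𝔉 : Set (Ideal S)) (M : Type*) [AddCommGroup M]
    [Module S M] : Set M :=
  {x : M | LinearMap.ker (LinearMap.toSpanSingleton S M x) ∈ 𝔉}

/-- The enveloping ring `R ⊗_ℤ Rᵐᵒᵖ`; an `R`-bimodule is the same thing as a right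
`R ⊗_ℤ Rᵐᵒᵖ`-module, i.e. a left `(R ⊗_ℤ Rᵐᵒᵖ)ᵐᵒᵖ`-module, via `x • (r ⊗ s) = s x r`. -/
abbrev Env (R : Type*) [Ring R] := R ⊗[ℤ] Rᵐᵒᵖ

/-- The left annihilator of an element of an `R`-bimodule, a left ideal of `R`:
`ann_l(x) = {s : R | s • x = 0}`, where the left action of `s` is the action of
`1 ⊗ op s`. -/
def lAnn {R : Type*} [Ring R] (M : Type*) [AddCommGroup M] [Module (Env R)ᵐᵒᵖ M]
    (x : M) : Ideal R where
  carrier := {s : R | op ((1 : R) ⊗ₜ[ℤ] op s) • x = 0}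
  zero_mem' := by simp; first | exact zero_smul (Env R)ᵐᵒᵖ x | exact zero_smul ℤ x | exact zero_smul ℕ x
  add_mem' := by
    intro a b ha hb
    simp only [Set.mem_setOf_eq] at *
    rw [show ((1 : R) ⊗ₜ[ℤ] op (a + b)) = (1 : R) ⊗ₜ[ℤ] op a + (1 : R) ⊗ₜ[ℤ] op b by
        rw [op_add, TensorProduct.tmul_add],
      op_add, add_smul, ha, hb, add_zero]
  smul_mem' := by
    intro c s hs
    simp only [Set.mem_setOf_eq, smul_eq_mul] at *
    rw [show ((1 : R) ⊗ₜ[ℤ] op (c * s)) = ((1 : R) ⊗ₜ[ℤ] op s) * ((1 : R) ⊗ₜ[ℤ] op c) by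
        rw [Algebra.TensorProduct.tmul_mul_tmul, one_mul, ← op_mul],
      op_mul, mul_smul, hs, smul_zero]

/-- The right annihilator of an element of an `R`-bimodule, a right ideal of `R`
(encoded as a left ideal of `Rᵐᵒᵖ`): `ann_r(x) = {r | x • r = 0}`, where the right
action of `r` is the action of `r ⊗ 1`. -/
def rAnn {R : Type*} [Ring R] (M : Type*) [AddCommGroup M] [Module (Env R)ᵐᵒᵖ M]
    (x : M) : Ideal Rᵐᵒᵖ where
  carrier := {j : Rᵐᵒᵖ | op (unop j ⊗ₜ[ℤ] (1 : Rᵐᵒᵖ)) • x = 0}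
  zero_mem' := by simp; first | exact zero_smul (Env R)ᵐᵒᵖ x | exact zero_smul ℤ x | exact zero_smul ℕ x
  add_mem' := by
    intro a b ha hb
    simp only [Set.mem_setOf_eq] at *
    rw [show (unop (a + b) ⊗ₜ[ℤ] (1 : Rᵐᵒᵖ)) =
          unop a ⊗ₜ[ℤ] (1 : Rᵐᵒᵖ) + unop b ⊗ₜ[ℤ] (1 : Rᵐᵒᵖ) by
        rw [unop_add, TensorProduct.add_tmul],
      op_add, add_smul, ha, hb, add_zero]
  smul_mem' := by
    intro c j hj
    simp only [Set.mem_setOf_eq, smul_eq_mul] at *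
    rw [show (unop (c * j) ⊗ₜ[ℤ] (1 : Rᵐᵒᵖ)) =
          (unop j ⊗ₜ[ℤ] (1 : Rᵐᵒᵖ)) * (unop c ⊗ₜ[ℤ] (1 : Rᵐᵒᵖ)) by
        rw [Algebra.TensorProduct.tmul_mul_tmul, one_mul, unop_mul],
      op_mul, mul_smul, hj, smul_zero]

/-- The symmetric annihilator of an element of a bimodule: the right ideal
`{t ∈ R ⊗_ℤ Rᵐᵒᵖ | x t = 0}`. -/
def symAnn {R : Type*} [Ring R] (M : Type*) [AddCommGroup M] [Module (Env R)ᵐᵒᵖ M]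
    (x : M) : Ideal (Env R)ᵐᵒᵖ :=
  LinearMap.ker (LinearMap.toSpanSingleton (Env R)ᵐᵒᵖ M x)

/-- The right ideal `J ⊗ Rᵐᵒᵖ + R ⊗ I` of `R ⊗_ℤ Rᵐᵒᵖ` generated by a left ideal `I`
and a right ideal `J` of `R`. -/
def symGen {R : Type*} [Ring R] (I : Ideal R) (J : Ideal Rᵐᵒᵖ) : Ideal (Env R)ᵐᵒᵖ :=
  Ideal.span ((fun j : Rᵐᵒᵖ => op (unop j ⊗ₜ[ℤ] (1 : Rᵐᵒᵖ))) '' (J : Set Rᵐᵒᵖ) ∪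
    (fun i : R => op ((1 : R) ⊗ₜ[ℤ] op i)) '' (I : Set R))

/-- The symmetric Gabriel filter induced by a left Gabriel filter `Fl` and a right
Gabriel filter `Fr`: the right ideals of `R ⊗_ℤ Rᵐᵒᵖ` containing `J ⊗ Rᵐᵒᵖ + R ⊗ I` for
some `I ∈ Fl` and `J ∈ Fr`. -/
def symSets {R : Type*} [Ring R] (Fl : GabrielFilter R) (Fr : GabrielFilter Rᵐᵒᵖ) :
    Set (Ideal (Env R)ᵐᵒᵖ) :=
  {K | ∃ I ∈ Fl.sets, ∃ J ∈ Fr.sets, symGen I J ≤ K}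

/-- The torsion submodule of a bimodule for the symmetric torsion theory induced by `Fl`
and `Fr`: `ₗt_r(M) = t_l(M) ∩ t_r(M)`. -/
def symTorsion {R : Type*} [Ring R] (Fl : GabrielFilter R) (Fr : GabrielFilter Rᵐᵒᵖ)
    (M : Type*) [AddCommGroup M] [Module (Env R)ᵐᵒᵖ M] : Set M :=
  {x : M | lAnn M x ∈ Fl.sets} ∩ {x : M | rAnn M x ∈ Fr.sets}

/-- `δ'` is the derivation induced on `R ⊗_ℤ Rᵐᵒᵖ` by the derivation `δ` on `R`:
`δ̄(r ⊗ s) = δ r ⊗ s + r ⊗ δ s`. -/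
def IsInducedDerivation {R : Type*} [Ring R] (δ : R → R) (δ' : Env R → Env R) : Prop :=
  (∀ a b : Env R, δ' (a + b) = δ' a + δ' b) ∧
    ∀ r s : R, δ' (r ⊗ₜ[ℤ] op s) = δ r ⊗ₜ[ℤ] op s + r ⊗ₜ[ℤ] op (δ s)

/-- `d` is a `δ`-derivation on the `R`-bimodule `M`: `d` is additive,
`d (x r) = (d x) r + x (δ r)` and `d (s x) = (δ s) x + s (d x)`. -/
def IsBimodDerivation {R : Type*} [Ring R] (δ : R → R) {M : Type*} [AddCommGroup M]
    [Module (Env R)ᵐᵒᵖ M] (d : M → M) : Prop :=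
  (∀ x y : M, d (x + y) = d x + d y) ∧
  (∀ (x : M) (r : R),
    d (op (r ⊗ₜ[ℤ] (1 : Rᵐᵒᵖ)) • x) =
      op (r ⊗ₜ[ℤ] (1 : Rᵐᵒᵖ)) • d x + op (δ r ⊗ₜ[ℤ] (1 : Rᵐᵒᵖ)) • x) ∧
  (∀ (x : M) (s : R),
    d (op ((1 : R) ⊗ₜ[ℤ] op s) • x) =
      op ((1 : R) ⊗ₜ[ℤ] op (δ s)) • x + op ((1 : R) ⊗ₜ[ℤ] op s) • d x)

/-- The symmetric filter induced by `Fl` and `Fr` is differential: for every `I` in the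
filter there is `K` in the filter with `δ̄(K) ⊆ I` for all derivations `δ` on `R`. -/
def IsSymDifferential {R : Type*} [Ring R] (Fl : GabrielFilter R)
    (Fr : GabrielFilter Rᵐᵒᵖ) : Prop :=
  ∀ I ∈ symSets Fl Fr, ∃ K ∈ symSets Fl Fr, ∀ δ : R → R, IsDerivation δ →
    ∀ δ' : Env R → Env R, IsInducedDerivation δ δ' →
      ∀ t : (Env R)ᵐᵒᵖ, t ∈ K → op (δ' (unop t)) ∈ I

/-- `q : M → Q` realizes `Q` as the symmetric module of quotients of the bimodule `M`
with respect to the symmetric filter induced by `Fl` and `Fr`: the kernel of `q` is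
`ₗt_r(M)`, `Q` is torsion free, the cokernel of `q` is torsion, and `Q` is closed. -/
structure IsSymModuleOfQuotients {R : Type*} [Ring R] (Fl : GabrielFilter R)
    (Fr : GabrielFilter Rᵐᵒᵖ) {M Q : Type*} [AddCommGroup M] [Module (Env R)ᵐᵒᵖ M]
    [AddCommGroup Q] [Module (Env R)ᵐᵒᵖ Q] (q : M →ₗ[(Env R)ᵐᵒᵖ] Q) : Prop where
  ker_eq : (LinearMap.ker q : Set M) = symTorsion Fl Fr M
  torsionFree : symTorsion Fl Fr Q = {0}
  coker_torsion : ∀ y : Q,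
    Submodule.comap (LinearMap.toSpanSingleton (Env R)ᵐᵒᵖ Q y) (LinearMap.range q) ∈
      symSets Fl Fr
  closed : ∀ K ∈ symSets Fl Fr, ∀ f : ↥K →ₗ[(Env R)ᵐᵒᵖ] Q,
    ∃ g : (Env R)ᵐᵒᵖ →ₗ[(Env R)ᵐᵒᵖ] Q, ∀ t : ↥K, g ↑t = f t

universe u

/-- `q : R → Q` realizes the ring `Q` as the symmetric ring of quotients of `R` with
respect to the symmetric filter induced by `Fl` and `Fr`: the bimodule structure of `Q`
comes from its ring structure via `q`, and `q` is a ring homomorphism which realizes `Q`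
as the symmetric module of quotients of the bimodule `R`. -/
structure IsSymRingOfQuotients {R : Type*} [Ring R] [Module (Env R)ᵐᵒᵖ R]
    (Fl : GabrielFilter R) (Fr : GabrielFilter Rᵐᵒᵖ) {Q : Type*} [Ring Q]
    [Module (Env R)ᵐᵒᵖ Q] (q : R →ₗ[(Env R)ᵐᵒᵖ] Q) : Prop where
  smul_def : ∀ (r s : R) (y : Q), op (r ⊗ₜ[ℤ] op s) • y = q s * y * q r
  map_mul : ∀ a b : R, q (a * b) = q a * q b
  map_one : q 1 = 1
  quotients : IsSymModuleOfQuotients Fl Fr q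

/-- Data exhibiting the symmetric filter induced by `Fl` and `Fr` as a perfect symmetric
filter: a ring `S` which is the symmetric ring of quotients of `R` with respect to the
filter via `f : R → S`, where `Fl` is exactly the family of left ideals `I` with
`S f(I) = S` and `Fr` is exactly the family of right ideals `J` with `f(J) S = S`. -/
structure PerfectSymRingData (R : Type u) [Ring R] [Module (Env R)ᵐᵒᵖ R]
    (Fl : GabrielFilter R) (Fr : GabrielFilter Rᵐᵒᵖ) : Type (u + 1) where
  S : Type u
  [ringS : Ring S]
  [modS : Module (Env R)ᵐᵒᵖ S]
  f : R →ₗ[(Env R)ᵐᵒᵖ] S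
  left_eq : Fl.sets = {I : Ideal R | Ideal.span (⇑f '' (I : Set R)) = ⊤}
  right_eq : Fr.sets =
    {J : Ideal Rᵐᵒᵖ |
      Submodule.span Sᵐᵒᵖ ((fun j : Rᵐᵒᵖ => f (unop j)) '' (J : Set Rᵐᵒᵖ)) = ⊤}
  isSROQ : IsSymRingOfQuotients Fl Fr f

/-- The symmetric filter induced by `Fl` and `Fr` is perfect. -/
def IsPerfectSymFilter (R : Type u) [Ring R] [Module (Env R)ᵐᵒᵖ R]
    (Fl : GabrielFilter R) (Fr : GabrielFilter Rᵐᵒᵖ) : Prop :=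
  Nonempty (PerfectSymRingData R Fl Fr)

/-- A left ideal of `R` is dense if for all `x y : R` with `x ≠ 0` there is `r : R` with
`r * y ∈ I` and `r * x ≠ 0`. -/
def IsDenseLeftIdeal {R : Type*} [Ring R] (I : Ideal R) : Prop :=
  ∀ x y : R, x ≠ 0 → ∃ r : R, r * y ∈ I ∧ r * x ≠ 0

/-- A right ideal of `R` (a left ideal of `Rᵐᵒᵖ`) is dense if for all `x y : R` with
`x ≠ 0` there is `r : R` with `y * r ∈ I` and `x * r ≠ 0`. -/
def IsDenseRightIdeal {R : Type*} [Ring R] (I : Ideal Rᵐᵒᵖ) : Prop :=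
  ∀ x y : R, x ≠ 0 → ∃ r : R, op r * op y ∈ I ∧ x * r ≠ 0

section Prelim

variable {R : Type*} [Ring R]

theorem deriv_zero19 {δ : R → R} (hδ : IsDerivation δ) : δ 0 = 0 := by
  have := hδ.1 0 0
  simpa using this.symm

theorem deriv_one19 {δ : R → R} (hδ : IsDerivation δ) : δ 1 = 0 := by
  have h := hδ.2 1 1
  simp only [one_mul, mul_one] at h
  have : δ 1 = δ 1 + δ 1 := by simpa using h
  have := congrArg (fun x => x - δ 1) this
  simpa using this.symm

/-- The induced map on the enveloping algebra. -/
noncomputable def dEnv (δ : R → R) (hδ : IsDerivation δ) : Env R →ₗ[ℤ] Env R :=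
  TensorProduct.map (AddMonoidHom.mk' δ hδ.1).toIntLinearMap LinearMap.id +
    TensorProduct.map LinearMap.id
      (AddMonoidHom.mk' (fun s : Rᵐᵒᵖ => op (δ (unop s)))
        (fun a b => by simp [hδ.1]) ).toIntLinearMap

theorem dEnv_tmul (δ : R → R) (hδ : IsDerivation δ) (r : R) (s : Rᵐᵒᵖ) :
    dEnv δ hδ (r ⊗ₜ[ℤ] s) = δ r ⊗ₜ[ℤ] s + r ⊗ₜ[ℤ] op (δ (unop s)) := by
  rfl

end Prelim
section Prelim2

variable {R : Type*} [Ring R]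

theorem dEnv_mul (δ : R → R) (hδ : IsDerivation δ) (a b : Env R) :
    dEnv δ hδ (a * b) = dEnv δ hδ a * b + a * dEnv δ hδ b := by
  induction a using TensorProduct.induction_on with
  | zero => simp
  | add a₁ a₂ h₁ h₂ =>
    rw [add_mul, map_add, map_add, h₁, h₂]
    simp only [add_mul]
    abel
  | tmul r s =>
    induction b using TensorProduct.induction_on with
    | zero => simp
    | add b₁ b₂ h₁ h₂ =>
      rw [mul_add, map_add, map_add, h₁, h₂, mul_add, mul_add]
      abel
    | tmul r' s' =>
      have e1 : op (δ (unop s)) * s' = op (unop s' * δ (unop s)) := by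
        rw [op_mul, op_unop]
      have e2 : s * op (δ (unop s')) = op (δ (unop s') * unop s) := by
        rw [op_mul, op_unop]
      rw [Algebra.TensorProduct.tmul_mul_tmul, dEnv_tmul, dEnv_tmul, dEnv_tmul,
        hδ.2, unop_mul, hδ.2, op_add, tmul_add, add_tmul, add_mul, mul_add,
        Algebra.TensorProduct.tmul_mul_tmul, Algebra.TensorProduct.tmul_mul_tmul,
        Algebra.TensorProduct.tmul_mul_tmul, Algebra.TensorProduct.tmul_mul_tmul,
        e1, e2]
      abel

/-- Lemma A : behaviour of δ on the bimodule R. -/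
theorem derivSmul19 [Module (Env R)ᵐᵒᵖ R]
    (hR : ∀ r s x : R, op (r ⊗ₜ[ℤ] op s) • x = s * x * r)
    (δ : R → R) (hδ : IsDerivation δ) (u : Env R) (x : R) :
    δ (op u • x) = op u • δ x + op (dEnv δ hδ u) • x := by
  induction u using TensorProduct.induction_on with
  | zero =>
    simp only [op_zero, zero_smul, map_zero]
    have h0 : ∀ z : R, (0 : (Env R)ᵐᵒᵖ) • z = 0 := fun z => zero_smul (Env R)ᵐᵒᵖ z
    show δ ((0 : (Env R)ᵐᵒᵖ) • x) = (0 : (Env R)ᵐᵒᵖ) • δ x + (0 : (Env R)ᵐᵒᵖ) • x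
    rw [h0, h0, deriv_zero19 hδ, zero_add]
  | add a b ha hb =>
    rw [op_add, add_smul, hδ.1, ha, hb, map_add, op_add]
    simp only [add_smul]
    abel
  | tmul r s =>
    have h1 : r ⊗ₜ[ℤ] s = r ⊗ₜ[ℤ] op (unop s) := by rw [op_unop]
    rw [h1, hR, dEnv_tmul, hδ.2, hδ.2, op_add, add_smul, hR, hR, hR, unop_op]
    noncomm_ring

end Prelim2
section Quot19

variable {R : Type*} [Ring R]

theorem symGen_mono19 {I I' : Ideal R} {J J' : Ideal Rᵐᵒᵖ} (hI : I ≤ I') (hJ : J ≤ J') :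
    symGen I J ≤ symGen I' J' :=
  Ideal.span_mono (Set.union_subset_union (Set.image_mono hJ) (Set.image_mono hI))

theorem symSets_inf19 {Fl : GabrielFilter R} {Fr : GabrielFilter Rᵐᵒᵖ}
    {K K' : Ideal (Env R)ᵐᵒᵖ}
    (h : K ∈ symSets Fl Fr) (h' : K' ∈ symSets Fl Fr) : K ⊓ K' ∈ symSets Fl Fr := by
  obtain ⟨I, hI, J, hJ, hle⟩ := h
  obtain ⟨I', hI', J', hJ', hle'⟩ := h'
  exact ⟨I ⊓ I', Fl.inf_mem hI hI', J ⊓ J', Fr.inf_mem hJ hJ',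
    le_inf (le_trans (symGen_mono19 inf_le_left inf_le_left) hle)
      (le_trans (symGen_mono19 inf_le_right inf_le_right) hle')⟩

theorem mem_symGen_left19 {I : Ideal R} {J : Ideal Rᵐᵒᵖ} {i : R} (hi : i ∈ I) :
    op ((1:R) ⊗ₜ[ℤ] op i) ∈ symGen I J :=
  Ideal.subset_span (Or.inr ⟨i, hi, rfl⟩)

theorem mem_symGen_right19 {I : Ideal R} {J : Ideal Rᵐᵒᵖ} {j : Rᵐᵒᵖ} (hj : j ∈ J) :
    op (unop j ⊗ₜ[ℤ] (1:Rᵐᵒᵖ)) ∈ symGen I J :=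
  Ideal.subset_span (Or.inl ⟨j, hj, rfl⟩)

theorem mem_lAnn19 {M : Type*} [AddCommGroup M] [Module (Env R)ᵐᵒᵖ M] {x : M} {s : R} :
    s ∈ lAnn M x ↔ op ((1:R) ⊗ₜ[ℤ] op s) • x = 0 := Iff.rfl

theorem mem_rAnn19 {M : Type*} [AddCommGroup M] [Module (Env R)ᵐᵒᵖ M] {x : M}
    {j : Rᵐᵒᵖ} : j ∈ rAnn M x ↔ op (unop j ⊗ₜ[ℤ] (1:Rᵐᵒᵖ)) • x = 0 := Iff.rfl

/-- If a bimodule is torsion free and an element is annihilated by a member of the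
symmetric filter, it is zero. -/
theorem lemZ19 {Fl : GabrielFilter R} {Fr : GabrielFilter Rᵐᵒᵖ} {Q : Type*}
    [AddCommGroup Q] [Module (Env R)ᵐᵒᵖ Q] (htf : symTorsion Fl Fr Q = {0}) (w : Q)
    {K : Ideal (Env R)ᵐᵒᵖ} (hK : K ∈ symSets Fl Fr) (h : ∀ t ∈ K, t • w = 0) :
    w = 0 := by
  obtain ⟨I, hI, J, hJ, hle⟩ := hK
  have h1 : I ≤ lAnn Q w := fun i hi => h _ (hle (mem_symGen_left19 hi))
  have h2 : J ≤ rAnn Q w := fun j hj => h _ (hle (mem_symGen_right19 hj))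
  have : w ∈ symTorsion Fl Fr Q := ⟨Fl.mono hI h1, Fr.mono hJ h2⟩
  rw [htf] at this
  exact this

end Quot19
section Core19

variable {R : Type*} [Ring R]

/-- The defining property of the extension of `δ` to a symmetric ring of quotients. -/
def ExtP [Module (Env R)ᵐᵒᵖ R] (δ : R → R) (hδ : IsDerivation δ) {Q : Type*}
    [AddCommGroup Q] [Module (Env R)ᵐᵒᵖ Q] (q : R →ₗ[(Env R)ᵐᵒᵖ] Q) (y z : Q) : Prop :=
  ∀ (t : (Env R)ᵐᵒᵖ) (x : R), t • y = q x →
    t • z = q (δ x) - op (dEnv δ hδ (unop t)) • y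

variable [Module (Env R)ᵐᵒᵖ R]
variable {δ : R → R}
variable {Fl : GabrielFilter R} {Fr : GabrielFilter Rᵐᵒᵖ}
variable {Q : Type*} [Ring Q] [Module (Env R)ᵐᵒᵖ Q] {q : R →ₗ[(Env R)ᵐᵒᵖ] Q}

theorem qinj19 (hfaith : symTorsion Fl Fr R = {0}) (hq : IsSymRingOfQuotients Fl Fr q) :
    Function.Injective q := by
  intro a b hab
  have h0 : ∀ x : R, q x = 0 → x = 0 := by
    intro x hx
    have hx2 : x ∈ (LinearMap.ker q : Set R) := hx
    rw [hq.quotients.ker_eq, hfaith] at hx2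
    exact hx2
  have := h0 (a - b) (by rw [map_sub, hab, sub_self])
  exact sub_eq_zero.mp this

theorem actL19 (hq : IsSymRingOfQuotients Fl Fr q) (s : R) (v : Q) :
    op ((1:R) ⊗ₜ[ℤ] op s) • v = q s * v := by
  rw [hq.smul_def, hq.map_one, mul_one]

theorem actR19 (hq : IsSymRingOfQuotients Fl Fr q) (r : R) (v : Q) :
    op (r ⊗ₜ[ℤ] (1:Rᵐᵒᵖ)) • v = v * q r := by
  rw [show (1:Rᵐᵒᵖ) = op (1:R) from rfl, hq.smul_def, hq.map_one, one_mul]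

theorem build19 (hR : ∀ r s x : R, op (r ⊗ₜ[ℤ] op s) • x = s * x * r)
    (hδ : IsDerivation δ) (hfaith : symTorsion Fl Fr R = {0})
    (hq : IsSymRingOfQuotients Fl Fr q) (y : Q) {K : Ideal (Env R)ᵐᵒᵖ}
    (hK : K ∈ symSets Fl Fr)
    (hmem : ∀ t : K, ∃ x : R, q x = (t : (Env R)ᵐᵒᵖ) • y)
    (hcov : ∀ (t : (Env R)ᵐᵒᵖ) (x : R), t • y = q x → t ∈ K) :
    ∃ z : Q, ExtP δ hδ q y z := by
  classical
  choose xf hxf using hmem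
  have hf : ∃ f : ↥K →ₗ[(Env R)ᵐᵒᵖ] Q, ∀ t,
      f t = q (δ (xf t)) - op (dEnv δ hδ (unop (t : (Env R)ᵐᵒᵖ))) • y := by
    refine ⟨{ toFun := fun t => q (δ (xf t)) - op (dEnv δ hδ (unop (t : (Env R)ᵐᵒᵖ))) • y
              map_add' := ?_
              map_smul' := ?_ }, fun t => rfl⟩
    · intro t t'
      have e : xf (t + t') = xf t + xf t' := by
        apply qinj19 hfaith hq
        rw [map_add, hxf, hxf, hxf, Submodule.coe_add, add_smul]
      rw [e, hδ.1, map_add, Submodule.coe_add, unop_add, map_add, op_add, add_smul]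
      abel
    · intro c t
      dsimp only [RingHom.id_apply]
      have e : xf (c • t) = c • xf t := by
        apply qinj19 hfaith hq
        rw [map_smul, hxf, hxf, Submodule.coe_smul, smul_eq_mul, mul_smul]
      have e2 : δ (c • xf t) = c • δ (xf t) + op (dEnv δ hδ (unop c)) • xf t := by
        have h3 := derivSmul19 hR δ hδ (unop c) (xf t)
        rwa [op_unop] at h3
      have e3 : unop ((c • t : K) : (Env R)ᵐᵒᵖ) = unop (t : (Env R)ᵐᵒᵖ) * unop c := by
        rw [Submodule.coe_smul, smul_eq_mul, unop_mul]
      rw [e, e2, e3, dEnv_mul, op_add, add_smul, op_mul, op_mul, op_unop, map_add,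
        map_smul, mul_smul, mul_smul, op_unop, map_smul, hxf, smul_sub]
      abel
  obtain ⟨f, hfspec⟩ := hf
  obtain ⟨g, hg⟩ := hq.quotients.closed _ hK f
  refine ⟨g 1, ?_⟩
  intro t x htx
  have ht : t ∈ K := hcov t x htx
  have h1 : g t = f ⟨t, ht⟩ := hg ⟨t, ht⟩
  have h2 : t • g 1 = g t := by rw [← map_smul, smul_eq_mul, mul_one]
  have h3 : xf ⟨t, ht⟩ = x := by
    apply qinj19 hfaith hq
    rw [hxf]; exact htx
  rw [h2, h1, hfspec, h3]

theorem exists_ext19 (hR : ∀ r s x : R, op (r ⊗ₜ[ℤ] op s) • x = s * x * r)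
    (hδ : IsDerivation δ) (hfaith : symTorsion Fl Fr R = {0})
    (hq : IsSymRingOfQuotients Fl Fr q) (y : Q) : ∃ z : Q, ExtP δ hδ q y z := by
  refine build19 hR hδ hfaith hq y (hq.quotients.coker_torsion y) ?_ ?_
  · intro t
    obtain ⟨x, hx⟩ := t.2
    exact ⟨x, hx⟩
  · intro t x htx
    exact ⟨x, htx.symm⟩

end Core19
section Core19b

variable {R : Type*} [Ring R] [Module (Env R)ᵐᵒᵖ R]
variable {δ : R → R} {hδ : IsDerivation δ}
variable {Fl : GabrielFilter R} {Fr : GabrielFilter Rᵐᵒᵖ}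
variable {Q : Type*} [Ring Q] [Module (Env R)ᵐᵒᵖ Q] {q : R →ₗ[(Env R)ᵐᵒᵖ] Q}

/-- `{r | ∃ x ∈ W, q x = q r * v}`. -/
def relL19 (q : R →ₗ[(Env R)ᵐᵒᵖ] Q) (hmul : ∀ a b : R, q (a * b) = q a * q b)
    (v : Q) (W : Ideal R) : Ideal R where
  carrier := {r : R | ∃ x ∈ W, q x = q r * v}
  zero_mem' := ⟨0, W.zero_mem, by simp⟩
  add_mem' := by
    rintro a b ⟨x, hxW, hx⟩ ⟨x', hxW', hx'⟩
    exact ⟨x + x', W.add_mem hxW hxW', by rw [map_add, map_add, hx, hx', add_mul]⟩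
  smul_mem' := by
    rintro c r ⟨x, hxW, hx⟩
    refine ⟨c * x, W.mul_mem_left c hxW, ?_⟩
    rw [smul_eq_mul, hmul, hmul, mul_assoc, hx]

theorem mem_relL19 {hmul : ∀ a b : R, q (a * b) = q a * q b} {v : Q} {W : Ideal R}
    {r : R} : r ∈ relL19 q hmul v W ↔ ∃ x ∈ W, q x = q r * v := Iff.rfl

/-- `{j | ∃ b ∈ W, q (unop b) = v * q (unop j)}`. -/
def relR19 (q : R →ₗ[(Env R)ᵐᵒᵖ] Q) (hmul : ∀ a b : R, q (a * b) = q a * q b)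
    (v : Q) (W : Ideal Rᵐᵒᵖ) : Ideal Rᵐᵒᵖ where
  carrier := {j : Rᵐᵒᵖ | ∃ b ∈ W, q (unop b) = v * q (unop j)}
  zero_mem' := ⟨0, W.zero_mem, by simp⟩
  add_mem' := by
    rintro a b ⟨x, hxW, hx⟩ ⟨x', hxW', hx'⟩
    refine ⟨x + x', W.add_mem hxW hxW', ?_⟩
    rw [unop_add, unop_add, map_add, map_add, hx, hx', mul_add]
  smul_mem' := by
    rintro c j ⟨b, hbW, hb⟩
    refine ⟨c * b, W.mul_mem_left c hbW, ?_⟩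
    show q (unop (c * b)) = v * q (unop (c • j))
    rw [smul_eq_mul, unop_mul, unop_mul, hmul, hmul, hb, mul_assoc]

theorem mem_relR19 {hmul : ∀ a b : R, q (a * b) = q a * q b} {v : Q} {W : Ideal Rᵐᵒᵖ}
    {j : Rᵐᵒᵖ} : j ∈ relR19 q hmul v W ↔ ∃ b ∈ W, q (unop b) = v * q (unop j) := Iff.rfl

theorem relL_mem_Fl19 (hq : IsSymRingOfQuotients Fl Fr q) (v : Q) :
    relL19 q hq.map_mul v ⊤ ∈ Fl.sets := by
  obtain ⟨I, hI, J, hJ, hle⟩ := hq.quotients.coker_torsion v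
  refine Fl.mono hI ?_
  intro i hi
  obtain ⟨x, hx⟩ := hle (mem_symGen_left19 (J := J) hi)
  have hx' : q x = op ((1:R) ⊗ₜ[ℤ] op i) • v := hx
  exact ⟨x, trivial, by rw [hx', actL19 hq]⟩

theorem relR_mem_Fr19 (hq : IsSymRingOfQuotients Fl Fr q) (v : Q) :
    relR19 q hq.map_mul v ⊤ ∈ Fr.sets := by
  obtain ⟨I, hI, J, hJ, hle⟩ := hq.quotients.coker_torsion v
  refine Fr.mono hJ ?_
  intro j hj
  obtain ⟨x, hx⟩ := hle (mem_symGen_right19 (I := I) hj)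
  have hx' : q x = op (unop j ⊗ₜ[ℤ] (1:Rᵐᵒᵖ)) • v := hx
  exact ⟨op x, trivial, by rw [unop_op, hx', actR19 hq]⟩

theorem relL_rel_mem_Fl19 (hq : IsSymRingOfQuotients Fl Fr q) (v : Q) {W : Ideal R}
    (hW : W ∈ Fl.sets) : relL19 q hq.map_mul v W ∈ Fl.sets := by
  refine Fl.trans (relL_mem_Fl19 hq v) ?_
  rintro s ⟨xs, -, hxs⟩
  refine Fl.mono (Fl.quot_mem hW xs) ?_
  rintro r hr
  refine ⟨r * xs, hr, ?_⟩
  show q (r * xs) = q (r * s) * v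
  rw [hq.map_mul, hq.map_mul, hxs, mul_assoc]

theorem relR_rel_mem_Fr19 (hq : IsSymRingOfQuotients Fl Fr q) (v : Q) {W : Ideal Rᵐᵒᵖ}
    (hW : W ∈ Fr.sets) : relR19 q hq.map_mul v W ∈ Fr.sets := by
  refine Fr.trans (relR_mem_Fr19 hq v) ?_
  rintro s ⟨bs, -, hbs⟩
  refine Fr.mono (Fr.quot_mem hW bs) ?_
  rintro r hr
  refine ⟨r * bs, hr, ?_⟩
  show q (unop (r * bs)) = v * q (unop (r * s))
  rw [unop_mul, unop_mul, hq.map_mul, hq.map_mul, hbs, mul_assoc]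

theorem ext_unique19 (hfaith : symTorsion Fl Fr R = {0})
    (hq : IsSymRingOfQuotients Fl Fr q) {y z z' : Q}
    (h : ExtP δ hδ q y z) (h' : ExtP δ hδ q y z') : z = z' := by
  refine sub_eq_zero.mp
    (lemZ19 hq.quotients.torsionFree _ (hq.quotients.coker_torsion y) ?_)
  intro t ht
  obtain ⟨x, hx⟩ := ht
  rw [smul_sub, h t x hx.symm, h' t x hx.symm, sub_self]

theorem ext_q19 (hR : ∀ r s x : R, op (r ⊗ₜ[ℤ] op s) • x = s * x * r) (hfaith : symTorsion Fl Fr R = {0})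
    (hq : IsSymRingOfQuotients Fl Fr q) (r : R) : ExtP δ hδ q (q r) (q (δ r)) := by
  intro t x htx
  have hx : x = t • r := qinj19 hfaith hq (htx.symm.trans (map_smul q t r).symm)
  have hA := derivSmul19 hR δ hδ (unop t) r
  rw [op_unop] at hA
  rw [hx, hA, map_add, map_smul, map_smul]
  abel

end Core19b
section Core19c

variable {R : Type*} [Ring R] [Module (Env R)ᵐᵒᵖ R]
variable {δ : R → R} {hδ : IsDerivation δ}
variable {Fl : GabrielFilter R} {Fr : GabrielFilter Rᵐᵒᵖ}
variable {Q : Type*} [Ring Q] [Module (Env R)ᵐᵒᵖ Q] {q : R →ₗ[(Env R)ᵐᵒᵖ] Q}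

theorem existsD19 (hR : ∀ r s x : R, op (r ⊗ₜ[ℤ] op s) • x = s * x * r)
    (hδ : IsDerivation δ) (hfaith : symTorsion Fl Fr R = {0})
    (hq : IsSymRingOfQuotients Fl Fr q) :
    ∃ D : Q → Q, IsDerivation D ∧ (∀ r : R, D (q r) = q (δ r)) ∧
      ∀ y : Q, ExtP δ hδ q y (D y) := by
  classical
  choose D hD using fun y : Q => exists_ext19 hR hδ hfaith hq y
  refine ⟨D, ⟨?_, ?_⟩, fun r => ext_unique19 hfaith hq (hD (q r)) (ext_q19 hR hfaith hq r),
    hD⟩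
  · -- additivity
    intro y y'
    have hz := lemZ19 hq.quotients.torsionFree (D (y + y') - (D y + D y'))
      (symSets_inf19 (hq.quotients.coker_torsion y) (hq.quotients.coker_torsion y')) ?_
    · have := sub_eq_zero.mp hz
      exact this
    intro t ht
    obtain ⟨htl, htr⟩ := ht
    obtain ⟨x, hx⟩ := htl
    obtain ⟨x', hx'⟩ := htr
    have hx2 : t • y = q x := hx.symm
    have hx2' : t • y' = q x' := hx'.symm
    have hsum : t • (y + y') = q (x + x') := by rw [smul_add t y y', map_add, hx2, hx2']
    rw [smul_sub, hD (y + y') t (x + x') hsum, smul_add t (D y) (D y'), hD y t x hx2,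
      hD y' t x' hx2', hδ.1, map_add, smul_add (op (dEnv δ hδ (unop t))) y y']
    abel
  · -- Leibniz rule
    intro y y'
    have hw : D (y * y') - (D y * y' + y * D y') = 0 := by
      have hmem : D (y * y') - (D y * y' + y * D y') ∈ symTorsion Fl Fr Q := by
        constructor
        · -- left annihilator
          refine Fl.mono (relL_rel_mem_Fl19 hq y (relL_mem_Fl19 hq y')) ?_
          rintro i ⟨a, ⟨c, -, hc⟩, ha⟩
          -- ha : q a = q i * y,  hc : q c = q a * y'
          have h1 : op ((1:R) ⊗ₜ[ℤ] op i) • (y * y') = q c := by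
            rw [actL19 hq, ← mul_assoc, ← ha, ← hc]
          have h2 : op ((1:R) ⊗ₜ[ℤ] op i) • y = q a := by rw [actL19 hq, ha]
          have h3 : op ((1:R) ⊗ₜ[ℤ] op a) • y' = q c := by rw [actL19 hq, hc]
          have e1 := hD (y * y') _ c h1
          have e2 := hD y _ a h2
          have e3 := hD y' _ c h3
          have hde : dEnv δ hδ ((1:R) ⊗ₜ[ℤ] op i) = (1:R) ⊗ₜ[ℤ] op (δ i) := by
            rw [dEnv_tmul, unop_op, deriv_one19 hδ, zero_tmul, zero_add]
          have hde2 : ∀ b : R, dEnv δ hδ ((1:R) ⊗ₜ[ℤ] op b) = (1:R) ⊗ₜ[ℤ] op (δ b) := by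
            intro b
            rw [dEnv_tmul, unop_op, deriv_one19 hδ, zero_tmul, zero_add]
          rw [actL19 hq, unop_op, hde, actL19 hq] at e1
          rw [actL19 hq, unop_op, hde, actL19 hq] at e2
          rw [actL19 hq, unop_op, hde2, actL19 hq] at e3
          show op ((1:R) ⊗ₜ[ℤ] op i) • (D (y * y') - (D y * y' + y * D y')) = 0
          rw [smul_sub, smul_add, actL19 hq, actL19 hq, actL19 hq, e1]
          have e4 : q i * (D y * y') = q (δ a) * y' - q (δ i) * y * y' := by
            rw [← mul_assoc, e2, sub_mul]
          have e5 : q i * (y * D y') = q a * D y' := by rw [← mul_assoc, ← ha]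
          rw [e4, e5, e3, ← mul_assoc]
          abel
        · -- right annihilator
          refine Fr.mono (relR_rel_mem_Fr19 hq y' (relR_mem_Fr19 hq y)) ?_
          rintro j ⟨b, ⟨cc, -, hcc⟩, hb⟩
          -- hb : q (unop b) = y' * q (unop j),  hcc : q (unop cc) = y * q (unop b)
          have h1 : op (unop j ⊗ₜ[ℤ] (1:Rᵐᵒᵖ)) • (y * y') = q (unop cc) := by
            rw [actR19 hq, mul_assoc, ← hb, ← hcc]
          have h2 : op (unop j ⊗ₜ[ℤ] (1:Rᵐᵒᵖ)) • y' = q (unop b) := by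
            rw [actR19 hq, hb]
          have h3 : op (unop b ⊗ₜ[ℤ] (1:Rᵐᵒᵖ)) • y = q (unop cc) := by
            rw [actR19 hq, hcc]
          have e1 := hD (y * y') _ (unop cc) h1
          have e2 := hD y' _ (unop b) h2
          have e3 := hD y _ (unop cc) h3
          have hde2 : ∀ v : Rᵐᵒᵖ, dEnv δ hδ (unop v ⊗ₜ[ℤ] (1:Rᵐᵒᵖ)) =
              δ (unop v) ⊗ₜ[ℤ] (1:Rᵐᵒᵖ) := by
            intro v
            rw [dEnv_tmul, show unop (1:Rᵐᵒᵖ) = (1:R) from rfl, deriv_one19 hδ, op_zero,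
              tmul_zero, add_zero]
          rw [actR19 hq, unop_op, hde2, actR19 hq] at e1
          rw [actR19 hq, unop_op, hde2, actR19 hq] at e2
          rw [actR19 hq, unop_op, hde2, actR19 hq] at e3
          show op (unop j ⊗ₜ[ℤ] (1:Rᵐᵒᵖ)) • (D (y * y') - (D y * y' + y * D y')) = 0
          rw [smul_sub, smul_add, actR19 hq, actR19 hq, actR19 hq, e1]
          have e4 : D y * y' * q (unop j) = q (δ (unop cc)) - y * q (δ (unop b)) := by
            rw [mul_assoc, ← hb, e3]
          have e5 : y * D y' * q (unop j) = y * q (δ (unop b)) - y * y' * q (δ (unop j)) := by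
            rw [mul_assoc, e2, mul_sub, ← mul_assoc]
          rw [e4, e5]
          abel
      rw [hq.quotients.torsionFree] at hmem
      exact hmem
    have := sub_eq_zero.mp hw
    exact this

end Core19c
/-- Let `δ` be a derivation on `R` and let `Q^σ_max(R)` be the maximal
symmetric ring of quotients, i.e. the symmetric ring of quotients for the symmetric
filter induced by the filters of dense left and dense right ideals.  The extension of `δ`
to the symmetric ring of quotients with respect to any hereditary and faithful symmetric
torsion theory agrees with the extension of `δ` to `Q^σ_max(R)`.  In particular, the
extensions of `δ` to the total symmetric ring of quotients `Q^σ_tot(R)` (the largest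
perfect symmetric ring of quotients) and to `Q^σ_max(R)` agree. -/
theorem extension_to_symQmax_agrees {R : Type u} [Ring R] [Module (Env R)ᵐᵒᵖ R]
    (hR : ∀ r s x : R, op (r ⊗ₜ[ℤ] op s) • x = s * x * r)
    (δ : R → R) (hδ : IsDerivation δ)
    (Dl : GabrielFilter R) (Dr : GabrielFilter Rᵐᵒᵖ)
    (hDl : Dl.sets = {I : Ideal R | IsDenseLeftIdeal I})
    (hDr : Dr.sets = {J : Ideal Rᵐᵒᵖ | IsDenseRightIdeal J})
    {QM : Type u} [Ring QM] [Module (Env R)ᵐᵒᵖ QM] (qM : R →ₗ[(Env R)ᵐᵒᵖ] QM)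
    (hqM : IsSymRingOfQuotients Dl Dr qM) :
    (∀ (Fl : GabrielFilter R) (Fr : GabrielFilter Rᵐᵒᵖ), symTorsion Fl Fr R = {0} →
      ∀ {Q : Type u} [Ring Q] [Module (Env R)ᵐᵒᵖ Q] (q : R →ₗ[(Env R)ᵐᵒᵖ] Q),
        IsSymRingOfQuotients Fl Fr q →
        ∀ q₁₂ : Q →ₗ[(Env R)ᵐᵒᵖ] QM, (∀ r : R, q₁₂ (q r) = qM r) →
          ∃ (δ₁ : Q → Q) (δ₂ : QM → QM), IsDerivation δ₁ ∧ IsDerivation δ₂ ∧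
            (∀ r : R, δ₁ (q r) = q (δ r)) ∧ (∀ r : R, δ₂ (qM r) = qM (δ r)) ∧
            (∀ y : Q, δ₂ (q₁₂ y) = q₁₂ (δ₁ y))) ∧
    (∀ (Flt : GabrielFilter R) (Frt : GabrielFilter Rᵐᵒᵖ), IsPerfectSymFilter R Flt Frt →
      (∀ (Fl' : GabrielFilter R) (Fr' : GabrielFilter Rᵐᵒᵖ), IsPerfectSymFilter R Fl' Fr' →
        symSets Fl' Fr' ⊆ symSets Flt Frt) →
      ∀ {Qt : Type u} [Ring Qt] [Module (Env R)ᵐᵒᵖ Qt] (qt : R →ₗ[(Env R)ᵐᵒᵖ] Qt),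
        IsSymRingOfQuotients Flt Frt qt →
        ∀ q₁₂ : Qt →ₗ[(Env R)ᵐᵒᵖ] QM, (∀ r : R, q₁₂ (qt r) = qM r) →
          ∃ (δ₁ : Qt → Qt) (δ₂ : QM → QM), IsDerivation δ₁ ∧ IsDerivation δ₂ ∧
            (∀ r : R, δ₁ (qt r) = qt (δ r)) ∧ (∀ r : R, δ₂ (qM r) = qM (δ r)) ∧
            (∀ y : Qt, δ₂ (q₁₂ y) = q₁₂ (δ₁ y))) := by
  classical
  -- the Lambek symmetric torsion theory is faithful
  have hfaithM : symTorsion Dl Dr R = {0} := by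
    ext x
    constructor
    · rintro ⟨hl, hr⟩
      by_contra hx
      simp only [Set.mem_singleton_iff] at hx
      rw [hDl] at hl
      obtain ⟨r, hrI, hrx⟩ := hl x 1 hx
      rw [mul_one] at hrI
      have h0 : op ((1:R) ⊗ₜ[ℤ] op r) • x = 0 := hrI
      rw [hR] at h0
      rw [mul_one] at h0
      exact hrx h0
    · intro hx
      simp only [Set.mem_singleton_iff] at hx
      subst hx
      constructor
      · show lAnn R 0 ∈ Dl.sets
        rw [hDl]
        intro a b ha
        refine ⟨1, ?_, by rwa [one_mul]⟩
        show op ((1:R) ⊗ₜ[ℤ] op (1 * b)) • (0:R) = 0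
        rw [smul_zero]
      · show rAnn R 0 ∈ Dr.sets
        rw [hDr]
        intro a b ha
        refine ⟨1, ?_, by rwa [mul_one]⟩
        show op (unop (op (1:R) * op b) ⊗ₜ[ℤ] (1:Rᵐᵒᵖ)) • (0:R) = 0
        rw [smul_zero]
  have H1 : ∀ (Fl : GabrielFilter R) (Fr : GabrielFilter Rᵐᵒᵖ), symTorsion Fl Fr R = {0} →
      ∀ {Q : Type u} [Ring Q] [Module (Env R)ᵐᵒᵖ Q] (q : R →ₗ[(Env R)ᵐᵒᵖ] Q),
        IsSymRingOfQuotients Fl Fr q →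
        ∀ q₁₂ : Q →ₗ[(Env R)ᵐᵒᵖ] QM, (∀ r : R, q₁₂ (q r) = qM r) →
          ∃ (δ₁ : Q → Q) (δ₂ : QM → QM), IsDerivation δ₁ ∧ IsDerivation δ₂ ∧
            (∀ r : R, δ₁ (q r) = q (δ r)) ∧ (∀ r : R, δ₂ (qM r) = qM (δ r)) ∧
            (∀ y : Q, δ₂ (q₁₂ y) = q₁₂ (δ₁ y)) := by
    intro Fl Fr hfaith Q _ _ q hq q₁₂ h12
    obtain ⟨D₁, hder₁, hext₁, hD₁⟩ := existsD19 hR hδ hfaith hq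
    obtain ⟨D₂, hder₂, hext₂, hD₂⟩ := existsD19 hR hδ hfaithM hqM
    have hinj12 : ∀ v : Q, q₁₂ v = 0 → v = 0 := by
      intro v hv
      refine lemZ19 hq.quotients.torsionFree v (hq.quotients.coker_torsion v) ?_
      intro t ht
      obtain ⟨x, hx⟩ := ht
      have hx' : q x = t • v := hx
      have hqMx : qM x = 0 := by
        rw [← h12, hx', map_smul, hv, smul_zero]
      have hx0 : x = 0 := qinj19 hfaithM hqM (by rw [hqMx, map_zero])
      rw [← hx', hx0, map_zero]
    have hcompat : ∀ y : Q, D₂ (q₁₂ y) = q₁₂ (D₁ y) := by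
      intro y
      refine sub_eq_zero.mp (lemZ19 hqM.quotients.torsionFree _
        (hqM.quotients.coker_torsion (q₁₂ y)) ?_)
      intro t ht
      obtain ⟨x, hx⟩ := ht
      have hx' : qM x = t • q₁₂ y := hx
      have hty : t • y = q x := by
        have h121 : q₁₂ (t • y - q x) = 0 := by
          rw [map_sub, map_smul, h12, ← hx', sub_self]
        exact sub_eq_zero.mp (hinj12 _ h121)
      have e1 := hD₂ (q₁₂ y) t x hx'.symm
      have e2 := hD₁ y t x hty
      have e3 : t • q₁₂ (D₁ y) = qM (δ x) - op (dEnv δ hδ (unop t)) • q₁₂ y := by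
        rw [← map_smul, e2, map_sub, h12, map_smul]
      rw [smul_sub, e1, e3, sub_self]
    exact ⟨D₁, D₂, hder₁, hder₂, hext₁, hext₂, hcompat⟩
  refine ⟨H1, ?_⟩
  intro Flt Frt _hperf _hmax Qt _ _ qt hqt q₁₂ h12
  have hfaithT : symTorsion Flt Frt R = {0} := by
    ext x
    constructor
    · intro hx
      have hker : x ∈ (LinearMap.ker qt : Set R) := by
        rw [hqt.quotients.ker_eq]; exact hx
      have hq0 : qt x = 0 := hker
      have hqM0 : qM x = 0 := by rw [← h12, hq0, map_zero]
      have hxk : x ∈ (LinearMap.ker qM : Set R) := hqM0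
      rw [hqM.quotients.ker_eq, hfaithM] at hxk
      exact hxk
    · intro hx
      simp only [Set.mem_singleton_iff] at hx
      subst hx
      have : (0:R) ∈ (LinearMap.ker qt : Set R) := by
        show qt 0 = 0
        rw [map_zero]
      rwa [hqt.quotients.ker_eq] at this
  exact H1 Flt Frt hfaithT qt hqt q₁₂ h12
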